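/- For fixed α > 0 and β < 0, the ratio softplus_0(β(x+α)) / softplus_0(βx) tends to exp(βα) as x → +∞. -/

import Mathlib

open Filter Real

lemma log_one_add_div_exp_tendsto (β : ℝ) (hβ : β < 0) :
    Tendsto (fun x : ℝ => Real.log (1 + Real.exp (β * x)) / Real.exp (β * x))
      atTop (nhds 1) := by
  have hderiv : HasDerivAt (fun y : ℝ => Real.log (1 + y)) 1 0 := by
    have h : HasDerivAt (fun y : ℝ => Real.log (1 + y)) (1 / (1 + 0)) 0 := by
      have h1 : HasDerivAt (fun y : ℝ => 1 + y) 1 0 := by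
        simpa using (hasDerivAt_id (0:ℝ)).const_add 1
      exact (Real.hasDerivAt_log (by norm_num)).comp 0 h1 |>.congr_deriv (by norm_num)
    simpa using h
  have hslope := hderiv.tendsto_slope_zero
  -- hslope : Tendsto (fun t => t⁻¹ • ((fun y => log (1+y)) (0 + t) - log (1+0))) (𝓝[≠] 0) (𝓝 1)
  have hslope' : Tendsto (fun t : ℝ => Real.log (1 + t) / t) (nhdsWithin 0 {0}ᶜ) (nhds 1) := by
    refine hslope.congr (fun t => ?_)
    simp [div_eq_inv_mul]
  have hexp : Tendsto (fun x : ℝ => Real.exp (β * x)) atTop (nhdsWithin 0 {0}ᶜ) := by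
    apply tendsto_nhdsWithin_of_tendsto_nhds_of_eventually_within
    · have : Tendsto (fun x : ℝ => β * x) atTop atBot :=
        tendsto_id.const_mul_atTop_of_neg hβ
      exact Real.tendsto_exp_atBot.comp this
    · exact Eventually.of_forall fun x => (Real.exp_pos _).ne'
  exact hslope'.comp hexp

theorem softplus_ratio_tendsto (α β : ℝ) (hα : 0 < α) (hβ : β < 0) :
    Filter.Tendsto
      (fun x : ℝ => Real.log (1 + Real.exp (β * (x + α))) / Real.log (1 + Real.exp (β * x)))
      Filter.atTop (nhds (Real.exp (β * α))) := by
  have h1 : Tendsto (fun x : ℝ => Real.log (1 + Real.exp (β * (x + α))) / Real.exp (β * (x + α)))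
      atTop (nhds 1) := by
    have := (log_one_add_div_exp_tendsto β hβ).comp (tendsto_atTop_add_const_right atTop α tendsto_id)
    exact this
  have h2 := log_one_add_div_exp_tendsto β hβ
  have h2' : Tendsto (fun x : ℝ => Real.exp (β * x) / Real.log (1 + Real.exp (β * x)))
      atTop (nhds 1) := by
    have := h2.inv₀ (by norm_num)
    simpa [inv_div] using this
  have key : Tendsto (fun x : ℝ =>
      (Real.log (1 + Real.exp (β * (x + α))) / Real.exp (β * (x + α))) *
      (Real.exp (β * x) / Real.log (1 + Real.exp (β * x))) * Real.exp (β * α))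
      atTop (nhds (Real.exp (β * α))) := by
    have := (h1.mul h2').mul_const (Real.exp (β * α))
    simpa using this
  refine key.congr (fun x => ?_)
  have hlogpos : ∀ y : ℝ, 0 < Real.log (1 + Real.exp y) := fun y =>
    Real.log_pos (by linarith [Real.exp_pos y])
  have hne1 : Real.log (1 + Real.exp (β * (x + α))) ≠ 0 := (hlogpos _).ne'
  have hne2 : Real.log (1 + Real.exp (β * x)) ≠ 0 := (hlogpos _).ne'
  have hexp : Real.exp (β * (x + α)) = Real.exp (β * x) * Real.exp (β * α) := by
    rw [← Real.exp_add]; ring_nf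
  field_simp
  rw [hexp]
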